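/- Let z₁, z₂ be standard Gaussians with correlation ρ ∈ (−1,1), and let a, b ∈ ℝ. With T₁, T₂ as above, E[z₁² · 1{z₁ ≥ a, z₂ ≥ b}] = (ρ√(1−ρ²)/(2π))·exp(−(a² − 2ρab + b²)/(2(1−ρ²))) + Φ₂(−a, −b, ρ) + (1/√(2π))·(a T₁ + ρ² b T₂). -/

import Mathlib

open MeasureTheory Real

/-- The standard normal probability density function. -/
noncomputable def stdGaussianPDF (t : ℝ) : ℝ :=
  (Real.sqrt (2 * Real.pi))⁻¹ * Real.exp (-t ^ 2 / 2)

/-- The standard normal cumulative distribution function. -/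
noncomputable def stdNormalCDF (x : ℝ) : ℝ :=
  ∫ t in Set.Iic x, stdGaussianPDF t

/-- Density of the bivariate standard Gaussian with correlation `ρ`. -/
noncomputable def bivStdGaussianPDF (ρ x y : ℝ) : ℝ :=
  (2 * Real.pi * Real.sqrt (1 - ρ ^ 2))⁻¹ *
    Real.exp (-(x ^ 2 - 2 * ρ * x * y + y ^ 2) / (2 * (1 - ρ ^ 2)))

/-- Joint CDF of the bivariate standard Gaussian with correlation `ρ`. -/
noncomputable def bivStdNormalCDF (a b ρ : ℝ) : ℝ :=
  ∫ p in Set.Iic a ×ˢ Set.Iic b, bivStdGaussianPDF ρ p.1 p.2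

namespace SqTruncAux

open Set Filter Topology

/-! ### Facts about the standard normal pdf and cdf -/

lemma phi_nonneg (t : ℝ) : 0 ≤ stdGaussianPDF t := by
  unfold stdGaussianPDF; positivity

lemma phi_cont : Continuous stdGaussianPDF := by
  unfold stdGaussianPDF; fun_prop

lemma phi_eq (t : ℝ) : stdGaussianPDF t
    = (Real.sqrt (2 * Real.pi))⁻¹ * Real.exp (-(1/2) * t ^ 2) := by
  unfold stdGaussianPDF; ring_nf

lemma phi_integrable : Integrable stdGaussianPDF := by
  rw [show stdGaussianPDF = fun t => (Real.sqrt (2 * Real.pi))⁻¹ * Real.exp (-(1/2) * t ^ 2) from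
    funext phi_eq]
  exact (integrable_exp_neg_mul_sq (by norm_num)).const_mul _

lemma phi_total : ∫ t, stdGaussianPDF t = 1 := by
  simp_rw [phi_eq]
  rw [integral_const_mul, integral_gaussian]
  have h : π / (1/2) = 2 * π := by ring
  rw [h, inv_mul_cancel₀]
  positivity

lemma phi_even (t : ℝ) : stdGaussianPDF (-t) = stdGaussianPDF t := by
  unfold stdGaussianPDF; ring_nf

lemma phi_hasDeriv (t : ℝ) : HasDerivAt stdGaussianPDF (-t * stdGaussianPDF t) t := by
  unfold stdGaussianPDF
  have h : HasDerivAt (fun t : ℝ => -t ^ 2 / 2) (-t) t := by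
    have := ((hasDerivAt_pow 2 t).neg).div_const 2
    simpa using this.congr_deriv (by ring)
  have := (h.exp).const_mul (Real.sqrt (2 * Real.pi))⁻¹
  refine this.congr_deriv ?_
  ring

lemma cdf_nonneg (x : ℝ) : 0 ≤ stdNormalCDF x :=
  setIntegral_nonneg measurableSet_Iic fun t _ => phi_nonneg t

lemma cdf_le_one (x : ℝ) : stdNormalCDF x ≤ 1 := by
  rw [← phi_total]
  exact setIntegral_le_integral phi_integrable (Filter.Eventually.of_forall phi_nonneg)

lemma cdf_hasDeriv (x : ℝ) : HasDerivAt stdNormalCDF (stdGaussianPDF x) x := by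
  have key : ∀ y : ℝ, stdNormalCDF y = stdNormalCDF 0 + ∫ t in (0:ℝ)..y, stdGaussianPDF t := by
    intro y
    have := intervalIntegral.integral_Iic_sub_Iic (f := stdGaussianPDF) (μ := volume)
      (a := 0) (b := y) phi_integrable.integrableOn phi_integrable.integrableOn
    unfold stdNormalCDF
    rw [← this]; ring
  have h : HasDerivAt (fun y => stdNormalCDF 0 + ∫ t in (0:ℝ)..y, stdGaussianPDF t)
      (stdGaussianPDF x) x := by
    refine HasDerivAt.const_add _ ?_
    exact intervalIntegral.integral_hasDerivAt_right
      phi_integrable.intervalIntegrable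
      (phi_cont.stronglyMeasurableAtFilter _ _) phi_cont.continuousAt
  rw [funext key]; exact h

/-! ### Affine substitution lemmas -/

lemma integral_Iic_comp_add_left (f : ℝ → ℝ) (d e : ℝ) :
    ∫ x in Iic d, f (e + x) = ∫ x in Iic (e + d), f x := by
  have A : MeasurableEmbedding fun x : ℝ => e + x :=
    (Homeomorph.addLeft e).isClosedEmbedding.measurableEmbedding
  have h := A.setIntegral_map (μ := volume) f (Iic (e + d))
  rw [map_add_left_eq_self (volume : Measure ℝ) e] at h
  rw [h]
  congr 1
  ext x
  simp

lemma integral_Ioi_comp_add_left (f : ℝ → ℝ) (d e : ℝ) :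
    ∫ x in Ioi d, f (e + x) = ∫ x in Ioi (e + d), f x := by
  have A : MeasurableEmbedding fun x : ℝ => e + x :=
    (Homeomorph.addLeft e).isClosedEmbedding.measurableEmbedding
  have h := A.setIntegral_map (μ := volume) f (Ioi (e + d))
  rw [map_add_left_eq_self (volume : Measure ℝ) e] at h
  rw [h]
  congr 1
  ext x
  simp

/-- Substitution `t = (μ₀ - y)/s` over `Ici c`. -/
lemma integral_Ici_comp_affine (f : ℝ → ℝ) {s : ℝ} (hs : 0 < s) (μ₀ c : ℝ) :
    ∫ y in Ici c, f ((μ₀ - y) / s) = s * ∫ t in Iic ((μ₀ - c) / s), f t := by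
  rw [integral_Ici_eq_integral_Ioi]
  have h1 := integral_comp_mul_left_Ioi (fun y => f ((μ₀ - y) / s)) (c / s) hs
  rw [mul_div_cancel₀ _ hs.ne'] at h1
  have h1' : (∫ x in Ioi c, f ((μ₀ - x) / s))
      = s • ∫ x in Ioi (c / s), f ((μ₀ - s * x) / s) := by
    rw [h1, smul_smul, mul_inv_cancel₀ hs.ne', one_smul]
  rw [h1']
  have h2 : ∀ x : ℝ, f ((μ₀ - s * x) / s) = (fun u => f (μ₀ / s + u)) (-x) := by
    intro x; simp only; congr 1; field_simp; ring
  simp_rw [h2]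
  rw [integral_comp_neg_Ioi (c / s) (fun u => f (μ₀ / s + u)),
    integral_Iic_comp_add_left f (-(c/s)) (μ₀/s),
    show μ₀ / s + -(c / s) = (μ₀ - c) / s by ring, smul_eq_mul]

/-- Substitution `t = (y - μ₀)/s` over `Ioi c`. -/
lemma integral_Ioi_comp_affine (f : ℝ → ℝ) {s : ℝ} (hs : 0 < s) (μ₀ c : ℝ) :
    ∫ y in Ioi c, f ((y - μ₀) / s) = s * ∫ t in Ioi ((c - μ₀) / s), f t := by
  have h1 := integral_comp_mul_left_Ioi (fun y => f ((y - μ₀) / s)) (c / s) hs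
  rw [mul_div_cancel₀ _ hs.ne'] at h1
  have h1' : (∫ x in Ioi c, f ((x - μ₀) / s))
      = s • ∫ x in Ioi (c / s), f ((s * x - μ₀) / s) := by
    rw [h1, smul_smul, mul_inv_cancel₀ hs.ne', one_smul]
  rw [h1']
  have h2 : ∀ x : ℝ, f ((s * x - μ₀) / s) = (fun u => f (-(μ₀ / s) + u)) x := by
    intro x; simp only; congr 1; field_simp; ring
  simp_rw [h2]
  rw [integral_Ioi_comp_add_left f (c / s) (-(μ₀/s)),
    show -(μ₀ / s) + c / s = (c - μ₀) / s by ring, smul_eq_mul]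

/-! ### Bivariate density facts -/

lemma biv_factor {ρ : ℝ} (h1 : 0 < 1 - ρ ^ 2) (x y : ℝ) :
    bivStdGaussianPDF ρ x y = stdGaussianPDF x *
      ((Real.sqrt (1 - ρ ^ 2))⁻¹ * stdGaussianPDF ((y - ρ * x) / Real.sqrt (1 - ρ ^ 2))) := by
  set s := Real.sqrt (1 - ρ ^ 2) with hsdef
  have hs : 0 < s := Real.sqrt_pos.2 h1
  have hs2 : s ^ 2 = 1 - ρ ^ 2 := Real.sq_sqrt h1.le
  have hsq : Real.sqrt (2 * π) * Real.sqrt (2 * π) = 2 * π :=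
    Real.mul_self_sqrt (by positivity)
  unfold bivStdGaussianPDF stdGaussianPDF
  have hc : ((2:ℝ) * π * s)⁻¹ = (Real.sqrt (2*π))⁻¹ * (s⁻¹ * (Real.sqrt (2*π))⁻¹) := by
    rw [show (Real.sqrt (2*π))⁻¹ * (s⁻¹ * (Real.sqrt (2*π))⁻¹)
        = (Real.sqrt (2*π) * Real.sqrt (2*π) * s)⁻¹ by rw [mul_inv, mul_inv]; ring, hsq]
  have he : -(x ^ 2 - 2 * ρ * x * y + y ^ 2) / (2 * (1 - ρ ^ 2))
      = -x ^ 2 / 2 + -((y - ρ * x) / s) ^ 2 / 2 := by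
    rw [div_pow, hs2]
    field_simp
    ring
  rw [hc, he, Real.exp_add]
  ring

lemma biv_even (ρ x y : ℝ) : bivStdGaussianPDF ρ (-x) (-y) = bivStdGaussianPDF ρ x y := by
  unfold bivStdGaussianPDF; ring_nf

lemma biv_nonneg (ρ x y : ℝ) : 0 ≤ bivStdGaussianPDF ρ x y := by
  unfold bivStdGaussianPDF; positivity

lemma biv_cont (ρ : ℝ) : Continuous fun p : ℝ × ℝ => bivStdGaussianPDF ρ p.1 p.2 := by
  unfold bivStdGaussianPDF; fun_prop

/-- Integrability of a shifted scaled gaussian. -/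
lemma phi_shift_integrable {s : ℝ} (hs : 0 < s) (c : ℝ) :
    Integrable fun y : ℝ => stdGaussianPDF ((y - c) / s) := by
  have h1 : Integrable fun y : ℝ => stdGaussianPDF (y / s) :=
    phi_integrable.comp_div hs.ne'
  exact h1.comp_sub_right c

lemma phi_shift_total {s : ℝ} (hs : 0 < s) (c : ℝ) :
    ∫ y : ℝ, stdGaussianPDF ((y - c) / s) = s := by
  rw [integral_sub_right_eq_self (fun y => stdGaussianPDF (y / s)) c,
    Measure.integral_comp_div stdGaussianPDF s, phi_total, smul_eq_mul,
    mul_one, abs_of_pos hs]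


/-! ### Product integrability and Fubini -/

lemma biv_weight_integrable {ρ : ℝ} (h1 : 0 < 1 - ρ ^ 2) {w : ℝ → ℝ} (hw : Continuous w)
    (hw0 : ∀ x, 0 ≤ w x) (hwi : Integrable fun x => w x * stdGaussianPDF x) :
    Integrable (fun p : ℝ × ℝ => w p.1 * bivStdGaussianPDF ρ p.1 p.2)
      ((volume : Measure ℝ).prod volume) := by
  set s := Real.sqrt (1 - ρ ^ 2) with hsdef
  have hs : 0 < s := Real.sqrt_pos.2 h1
  refine (integrable_prod_iff ?_).2 ⟨?_, ?_⟩
  · exact ((hw.comp continuous_fst).mul (biv_cont ρ)).aestronglyMeasurable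
  · refine Eventually.of_forall fun x => ?_
    simp only
    have heq : (fun y => w x * bivStdGaussianPDF ρ x y)
        = fun y => (w x * (stdGaussianPDF x * s⁻¹)) * stdGaussianPDF ((y - ρ * x) / s) :=
      funext fun y => by rw [biv_factor h1]; ring
    rw [heq]
    exact (phi_shift_integrable hs (ρ * x)).const_mul _
  · have heq : (fun x => ∫ y, ‖w x * bivStdGaussianPDF ρ x y‖)
        = fun x => w x * stdGaussianPDF x := by
      funext x
      have hnn : ∀ y : ℝ, ‖w x * bivStdGaussianPDF ρ x y‖
          = (w x * (stdGaussianPDF x * s⁻¹)) * stdGaussianPDF ((y - ρ * x) / s) := fun y => by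
        rw [Real.norm_eq_abs, abs_of_nonneg (mul_nonneg (hw0 x) (biv_nonneg ρ x y)),
          biv_factor h1]
        ring
      simp_rw [hnn]
      rw [integral_const_mul, phi_shift_total hs]
      rw [mul_assoc, mul_assoc, inv_mul_cancel₀ hs.ne', mul_one]
    rw [heq]
    exact hwi

lemma inner_Ici {ρ : ℝ} (h1 : 0 < 1 - ρ ^ 2) (b x : ℝ) :
    ∫ y in Ici b, bivStdGaussianPDF ρ x y
      = stdGaussianPDF x * stdNormalCDF ((ρ * x - b) / Real.sqrt (1 - ρ ^ 2)) := by
  set s := Real.sqrt (1 - ρ ^ 2) with hsdef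
  have hs : 0 < s := Real.sqrt_pos.2 h1
  have heq : ∀ y : ℝ, bivStdGaussianPDF ρ x y
      = (stdGaussianPDF x * s⁻¹) * stdGaussianPDF ((ρ * x - y) / s) := by
    intro y
    rw [biv_factor h1, show (ρ * x - y) / s = -((y - ρ * x) / s) by ring, phi_even]
    ring
  simp_rw [heq]
  rw [integral_const_mul, integral_Ici_comp_affine stdGaussianPDF hs (ρ * x) b]
  unfold stdNormalCDF
  rw [show stdGaussianPDF x * s⁻¹ * (s * ∫ t in Iic ((ρ * x - b) / s), stdGaussianPDF t)
      = stdGaussianPDF x * (s⁻¹ * s) * ∫ t in Iic ((ρ * x - b) / s), stdGaussianPDF t by ring,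
    inv_mul_cancel₀ hs.ne', mul_one]

lemma quadrant_eq {ρ : ℝ} (h1 : 0 < 1 - ρ ^ 2) {w : ℝ → ℝ} (hw : Continuous w)
    (hw0 : ∀ x, 0 ≤ w x) (hwi : Integrable fun x => w x * stdGaussianPDF x) (a b : ℝ) :
    ∫ p in Ici a ×ˢ Ici b, w p.1 * bivStdGaussianPDF ρ p.1 p.2
      = ∫ x in Ici a, w x * (stdGaussianPDF x
          * stdNormalCDF ((ρ * x - b) / Real.sqrt (1 - ρ ^ 2))) := by
  rw [Measure.volume_eq_prod]
  rw [setIntegral_prod _ ((biv_weight_integrable h1 hw hw0 hwi).integrableOn)]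
  refine setIntegral_congr_fun measurableSet_Ici fun x _ => ?_
  simp only
  rw [integral_const_mul, inner_Ici h1]

lemma bivCDF_eq {ρ : ℝ} (h1 : 0 < 1 - ρ ^ 2) (a b : ℝ) :
    bivStdNormalCDF (-a) (-b) ρ = ∫ x in Ici a,
      stdGaussianPDF x * stdNormalCDF ((ρ * x - b) / Real.sqrt (1 - ρ ^ 2)) := by
  have hint : Integrable (fun p : ℝ × ℝ => bivStdGaussianPDF ρ p.1 p.2)
      ((volume : Measure ℝ).prod volume) := by
    have := biv_weight_integrable h1 (w := fun _ => (1:ℝ)) continuous_const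
      (fun _ => zero_le_one) (by simpa using phi_integrable)
    simpa using this
  unfold bivStdNormalCDF
  rw [Measure.volume_eq_prod]
  rw [setIntegral_prod _ hint.integrableOn]
  have hF : ∀ x : ℝ, (∫ y in Iic (-b), bivStdGaussianPDF ρ (-x) y)
      = stdGaussianPDF x * stdNormalCDF ((ρ * x - b) / Real.sqrt (1 - ρ ^ 2)) := by
    intro x
    rw [← integral_comp_neg_Ioi b (fun y => bivStdGaussianPDF ρ (-x) y)]
    simp_rw [biv_even]
    rw [← integral_Ici_eq_integral_Ioi, inner_Ici h1]
  rw [← integral_comp_neg_Ioi a (fun x => ∫ y in Iic (-b), bivStdGaussianPDF ρ x y)]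
  simp_rw [hF]
  rw [← integral_Ici_eq_integral_Ioi]


/-! ### One-dimensional ingredients -/

lemma poly_gauss_integrable (n : ℕ) : Integrable fun x : ℝ => x ^ n * stdGaussianPDF x := by
  have h := integrable_rpow_mul_exp_neg_mul_sq (b := (1:ℝ)/2) (by norm_num)
    (s := (n:ℝ)) (lt_of_lt_of_le neg_one_lt_zero (Nat.cast_nonneg n))
  refine (h.const_mul (Real.sqrt (2 * π))⁻¹).congr (Eventually.of_forall fun x => ?_)
  simp only
  rw [Real.rpow_natCast, phi_eq]
  ring

lemma phi_le (t : ℝ) : stdGaussianPDF t ≤ (Real.sqrt (2 * π))⁻¹ := by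
  unfold stdGaussianPDF
  have h : Real.exp (-t ^ 2 / 2) ≤ 1 := by
    rw [Real.exp_le_one_iff]
    nlinarith [sq_nonneg t]
  nlinarith [Real.sqrt_nonneg (2 * π), inv_nonneg.2 (Real.sqrt_nonneg (2 * π)), h]

lemma tendsto_pow_gauss (n : ℕ) :
    Tendsto (fun x : ℝ => x ^ n * stdGaussianPDF x) atTop (𝓝 0) := by
  have h := rpow_mul_exp_neg_mul_sq_isLittleO_exp_neg (b := (1:ℝ)/2) (by norm_num) (n:ℝ)
  have hc : Tendsto (fun x : ℝ => Real.exp (-(1/2 * x))) atTop (𝓝 0) :=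
    Real.tendsto_exp_neg_atTop_nhds_zero.comp
      (Tendsto.const_mul_atTop (by norm_num) tendsto_id)
  have h2 : Tendsto (fun x : ℝ => x ^ (n:ℝ) * Real.exp (-(1/2) * x ^ 2)) atTop (𝓝 0) :=
    h.trans_tendsto (by simpa [neg_mul] using hc)
  have h3 := h2.const_mul (Real.sqrt (2 * π))⁻¹
  rw [mul_zero] at h3
  refine h3.congr fun x => ?_
  rw [Real.rpow_natCast, phi_eq]
  ring

lemma int_id_gauss (A : ℝ) : ∫ u in Ioi A, u * stdGaussianPDF u = stdGaussianPDF A := by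
  have hd : ∀ u ∈ Ici A, HasDerivAt (fun u => -stdGaussianPDF u) (u * stdGaussianPDF u) u :=
    fun u _ => ((phi_hasDeriv u).neg).congr_deriv (by ring)
  have hint : IntegrableOn (fun u => u * stdGaussianPDF u) (Ioi A) := by
    refine ((poly_gauss_integrable 1).congr (Eventually.of_forall fun x => ?_)).integrableOn
    simp
  have hlim : Tendsto (fun u => -stdGaussianPDF u) atTop (𝓝 0) := by
    have := (tendsto_pow_gauss 0).neg
    rw [neg_zero] at this
    refine this.congr fun x => ?_
    simp
  have := integral_Ioi_of_hasDerivAt_of_tendsto' hd hint hlim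
  rw [this]
  simp

lemma int_gauss_Ioi (A : ℝ) : ∫ u in Ioi A, stdGaussianPDF u = stdNormalCDF (-A) := by
  have h : ∀ u : ℝ, stdGaussianPDF u = stdGaussianPDF (-u) := fun u => (phi_even u).symm
  rw [funext h, integral_comp_neg_Ioi A stdGaussianPDF]
  rfl

lemma gauss_prod {ρ : ℝ} (h1 : 0 < 1 - ρ ^ 2) (b x : ℝ) :
    stdGaussianPDF x * stdGaussianPDF ((ρ * x - b) / Real.sqrt (1 - ρ ^ 2))
      = stdGaussianPDF b * stdGaussianPDF ((x - ρ * b) / Real.sqrt (1 - ρ ^ 2)) := by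
  have hs2 : Real.sqrt (1 - ρ ^ 2) ^ 2 = 1 - ρ ^ 2 := Real.sq_sqrt h1.le
  unfold stdGaussianPDF
  rw [div_pow, div_pow, hs2, mul_mul_mul_comm, ← Real.exp_add,
    mul_mul_mul_comm, ← Real.exp_add]
  congr 1
  field_simp
  ring

lemma oneD {ρ b : ℝ} (h1 : 0 < 1 - ρ ^ 2) (a : ℝ) :
    ∫ x in Ioi a, x ^ 2 * (stdGaussianPDF x
        * stdNormalCDF ((ρ * x - b) / Real.sqrt (1 - ρ ^ 2)))
      = a * stdGaussianPDF a * stdNormalCDF ((ρ * a - b) / Real.sqrt (1 - ρ ^ 2))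
        + (∫ x in Ioi a, stdGaussianPDF x * stdNormalCDF ((ρ * x - b) / Real.sqrt (1 - ρ ^ 2)))
        + (ρ / Real.sqrt (1 - ρ ^ 2)) * ∫ x in Ioi a,
            x * (stdGaussianPDF x * stdGaussianPDF ((ρ * x - b) / Real.sqrt (1 - ρ ^ 2))) := by
  set s := Real.sqrt (1 - ρ ^ 2) with hsdef
  have hs : 0 < s := Real.sqrt_pos.2 h1
  set g : ℝ → ℝ := fun x => stdNormalCDF ((ρ * x - b) / s) with hgdef
  set g' : ℝ → ℝ := fun x => ρ / s * stdGaussianPDF ((ρ * x - b) / s) with hg'def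
  have hgd : ∀ x : ℝ, HasDerivAt g (g' x) x := by
    intro x
    have hi : HasDerivAt (fun x : ℝ => (ρ * x - b) / s) (ρ / s) x := by
      have := (((hasDerivAt_id x).const_mul ρ).sub_const b).div_const s
      simpa using this
    have := (cdf_hasDeriv ((ρ * x - b) / s)).comp x hi
    exact this.congr_deriv (by rw [hg'def]; ring)
  have hgc : Continuous g := continuous_iff_continuousAt.2 fun x => (hgd x).continuousAt
  have hg0 : ∀ x, 0 ≤ g x := fun x => cdf_nonneg _
  have hg1 : ∀ x, g x ≤ 1 := fun x => cdf_le_one _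
  set H : ℝ → ℝ := fun x => -x * stdGaussianPDF x * g x with hHdef
  have hHd : ∀ x : ℝ, HasDerivAt H
      (x ^ 2 * (stdGaussianPDF x * g x) - stdGaussianPDF x * g x
        - x * stdGaussianPDF x * g' x) x := by
    intro x
    have h1' : HasDerivAt (fun x : ℝ => -x * stdGaussianPDF x)
        (-stdGaussianPDF x + x ^ 2 * stdGaussianPDF x) x := by
      have := ((hasDerivAt_id x).neg).mul (phi_hasDeriv x)
      exact this.congr_deriv (by simp only [Pi.neg_apply, id_eq]; ring)
    exact (h1'.mul (hgd x)).congr_deriv (by ring)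
  have hlim : Tendsto H atTop (𝓝 0) := by
    have h0 : Tendsto (fun x : ℝ => -(x * stdGaussianPDF x)) atTop (𝓝 0) := by
      have := (tendsto_pow_gauss 1).neg
      rw [neg_zero] at this
      exact this.congr fun x => by rw [pow_one]
    refine tendsto_of_tendsto_of_tendsto_of_le_of_le' h0 tendsto_const_nhds ?_ ?_
    · filter_upwards [eventually_ge_atTop (0:ℝ)] with x hx
      rw [hHdef]
      simp only
      have := mul_le_of_le_one_right (mul_nonneg hx (phi_nonneg x)) (hg1 x)
      nlinarith [phi_nonneg x, hg0 x]
    · filter_upwards [eventually_ge_atTop (0:ℝ)] with x hx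
      rw [hHdef]
      simp only
      nlinarith [mul_nonneg (mul_nonneg hx (phi_nonneg x)) (hg0 x)]
  have iphig : IntegrableOn (fun x => stdGaussianPDF x * g x) (Ioi a) := by
    refine ((phi_integrable.bdd_mul hgc.aestronglyMeasurable
      (c := 1) (Eventually.of_forall fun x => ?_)).congr (Eventually.of_forall fun x => mul_comm _ _)).integrableOn
    rw [Real.norm_eq_abs, abs_of_nonneg (hg0 x)]
    exact hg1 x
  have ix2 : IntegrableOn (fun x => x ^ 2 * (stdGaussianPDF x * g x)) (Ioi a) := by
    refine (((poly_gauss_integrable 2).bdd_mul hgc.aestronglyMeasurable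
      (c := 1) (Eventually.of_forall fun x => ?_)).congr (Eventually.of_forall fun x => ?_)).integrableOn
    · rw [Real.norm_eq_abs, abs_of_nonneg (hg0 x)]
      exact hg1 x
    · simp only; ring
  have ixg' : IntegrableOn (fun x => x * stdGaussianPDF x * g' x) (Ioi a) := by
    have hbd : ∃ C, ∀ x : ℝ, ‖g' x‖ ≤ C := by
      refine ⟨|ρ / s| * (Real.sqrt (2 * π))⁻¹, fun x => ?_⟩
      rw [hg'def]
      simp only [Real.norm_eq_abs, abs_mul]
      gcongr
      · rw [abs_of_nonneg (phi_nonneg _)]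
        exact phi_le _
    have hg'c : Continuous g' := by
      rw [hg'def]
      exact continuous_const.mul (phi_cont.comp (by fun_prop))
    refine (((poly_gauss_integrable 1).bdd_mul hg'c.aestronglyMeasurable (Eventually.of_forall hbd.choose_spec)).congr
      (Eventually.of_forall fun x => ?_)).integrableOn
    simp only
    rw [pow_one]
    ring
  have i12 : IntegrableOn (fun x => x ^ 2 * (stdGaussianPDF x * g x)
      - stdGaussianPDF x * g x) (Ioi a) := ix2.sub iphig
  have key := integral_Ioi_of_hasDerivAt_of_tendsto' (fun x _ => hHd x)
    (i12.sub ixg') hlim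
  rw [integral_sub i12 ixg', integral_sub ix2 iphig] at key
  have hHa : H a = -a * stdGaussianPDF a * g a := rfl
  have hterm : (∫ x in Ioi a, x * stdGaussianPDF x * g' x)
      = (ρ / s) * ∫ x in Ioi a,
          x * (stdGaussianPDF x * stdGaussianPDF ((ρ * x - b) / s)) := by
    rw [← integral_const_mul]
    refine setIntegral_congr_fun measurableSet_Ioi fun x _ => ?_
    rw [hg'def]
    ring
  rw [hterm] at key
  rw [hHa] at key
  simp only [hgdef] at key
  linarith [key]


lemma term3 {ρ b : ℝ} (h1 : 0 < 1 - ρ ^ 2) (a : ℝ) :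
    ∫ x in Ioi a, x * (stdGaussianPDF x * stdGaussianPDF ((ρ * x - b) / Real.sqrt (1 - ρ ^ 2)))
      = stdGaussianPDF b * (Real.sqrt (1 - ρ ^ 2) *
          (Real.sqrt (1 - ρ ^ 2) * stdGaussianPDF ((a - ρ * b) / Real.sqrt (1 - ρ ^ 2))
            + ρ * b * stdNormalCDF ((ρ * b - a) / Real.sqrt (1 - ρ ^ 2)))) := by
  set s := Real.sqrt (1 - ρ ^ 2) with hsdef
  have hs : 0 < s := Real.sqrt_pos.2 h1
  have hrw : ∀ x : ℝ, x * (stdGaussianPDF x * stdGaussianPDF ((ρ * x - b) / s))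
      = stdGaussianPDF b *
          ((s * ((x - ρ * b) / s) + ρ * b) * stdGaussianPDF ((x - ρ * b) / s)) := by
    intro x
    rw [gauss_prod h1, show s * ((x - ρ * b) / s) + ρ * b = x by field_simp; ring]
    ring
  simp_rw [hrw]
  rw [integral_const_mul]
  have h2 := integral_Ioi_comp_affine (fun u => (s * u + ρ * b) * stdGaussianPDF u) hs (ρ * b) a
  rw [h2]
  have hsplit : ∫ u in Ioi ((a - ρ * b) / s), (s * u + ρ * b) * stdGaussianPDF u
      = s * stdGaussianPDF ((a - ρ * b) / s) + ρ * b * stdNormalCDF ((ρ * b - a) / s) := by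
    have i1 : IntegrableOn (fun u : ℝ => s * (u * stdGaussianPDF u)) (Ioi ((a - ρ * b) / s)) :=
      (((poly_gauss_integrable 1).congr
        (Eventually.of_forall fun x => by simp)).const_mul s).integrableOn
    have i2 : IntegrableOn (fun u : ℝ => ρ * b * stdGaussianPDF u) (Ioi ((a - ρ * b) / s)) :=
      (phi_integrable.const_mul _).integrableOn
    have hpt : ∀ u : ℝ, (s * u + ρ * b) * stdGaussianPDF u
        = s * (u * stdGaussianPDF u) + ρ * b * stdGaussianPDF u := fun u => by ring
    simp_rw [hpt]
    rw [integral_add i1 i2, integral_const_mul, integral_const_mul, int_id_gauss, int_gauss_Ioi,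
      show -((a - ρ * b) / s) = (ρ * b - a) / s by ring]
  rw [hsplit]

end SqTruncAux

open SqTruncAux Set in
/-- For a bivariate standard Gaussian `(z₁, z₂)` with correlation `ρ ∈ (−1,1)`:
`E[z₁² 1{z₁ ≥ a, z₂ ≥ b}] = (ρ√(1−ρ²)/(2π)) exp(−(a² − 2ρab + b²)/(2(1−ρ²)))
  + Φ₂(−a, −b, ρ) + (1/√(2π)) (a T₁ + ρ² b T₂)`. -/
theorem square_truncated_bivariate (a b ρ : ℝ) (hρ : ρ ∈ Set.Ioo (-1 : ℝ) 1) :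
    (∫ p in Set.Ici a ×ˢ Set.Ici b, p.1 ^ 2 * bivStdGaussianPDF ρ p.1 p.2) =
      ρ * Real.sqrt (1 - ρ ^ 2) / (2 * Real.pi) *
          Real.exp (-(a ^ 2 - 2 * ρ * a * b + b ^ 2) / (2 * (1 - ρ ^ 2))) +
        bivStdNormalCDF (-a) (-b) ρ +
        (Real.sqrt (2 * Real.pi))⁻¹ *
          (a * (Real.exp (-a ^ 2 / 2) * stdNormalCDF ((ρ * a - b) / Real.sqrt (1 - ρ ^ 2))) +
            ρ ^ 2 * b * (Real.exp (-b ^ 2 / 2) *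
              stdNormalCDF ((ρ * b - a) / Real.sqrt (1 - ρ ^ 2)))) := by
  obtain ⟨hρ1, hρ2⟩ := hρ
  have h1 : 0 < 1 - ρ ^ 2 := by nlinarith
  set s := Real.sqrt (1 - ρ ^ 2) with hsdef
  have hs : 0 < s := Real.sqrt_pos.2 h1
  have hs2 : s ^ 2 = 1 - ρ ^ 2 := Real.sq_sqrt h1.le
  have hsq : Real.sqrt (2 * π) * Real.sqrt (2 * π) = 2 * π :=
    Real.mul_self_sqrt (by positivity)
  have hquad := quadrant_eq h1 (w := fun x : ℝ => x ^ 2) (continuous_pow 2)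
    (fun x => sq_nonneg x) (poly_gauss_integrable 2) a b
  rw [hquad, integral_Ici_eq_integral_Ioi, oneD h1 a, term3 h1 a]
  have hbiv : bivStdNormalCDF (-a) (-b) ρ
      = ∫ x in Ioi a, stdGaussianPDF x * stdNormalCDF ((ρ * x - b) / s) := by
    rw [bivCDF_eq h1 a b, integral_Ici_eq_integral_Ioi]
  rw [← hbiv]
  have hprod : stdGaussianPDF b * stdGaussianPDF ((a - ρ * b) / s)
      = (2 * π)⁻¹ * Real.exp (-(a ^ 2 - 2 * ρ * a * b + b ^ 2) / (2 * (1 - ρ ^ 2))) := by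
    unfold stdGaussianPDF
    rw [mul_mul_mul_comm, ← Real.exp_add,
      show (Real.sqrt (2*π))⁻¹ * (Real.sqrt (2*π))⁻¹ = (2*π)⁻¹ by rw [← mul_inv, hsq]]
    congr 1
    rw [div_pow, hs2]
    field_simp
    ring
  rw [show ρ / s * (stdGaussianPDF b * (s * (s * stdGaussianPDF ((a - ρ * b) / s)
        + ρ * b * stdNormalCDF ((ρ * b - a) / s))))
      = ρ * s * (stdGaussianPDF b * stdGaussianPDF ((a - ρ * b) / s))
        + ρ ^ 2 * b * stdGaussianPDF b * stdNormalCDF ((ρ * b - a) / s) by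
    field_simp]
  rw [hprod]
  unfold stdGaussianPDF
  ring
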